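/- Along the flow ẏ = -k·y·(1/‖y‖ + ‖y‖) with k > 0, the norm r(t) = ‖y(t)‖ satisfies the scalar ODE ṙ = -k(1 + r²), whose solution is r(t) = tan(arctan(r(0)) - kt), which reaches 0 exactly at time t* = arctan(r(0))/k < π/(2k). -/

import Mathlib

/-- Along `ẏ = -k·y·(1/‖y‖ + ‖y‖)` with `y ≠ 0` on `[0,T]`, the norm `r = ‖y‖`
satisfies `ṙ = -k(1+r²)`, has the closed form `r(t) = tan(arctan r(0) - kt)`, and
vanishes exactly at `t* = arctan(r(0))/k < π/(2k)`. -/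
theorem stmt_14 (n : ℕ) (k T : ℝ) (hk : 0 < k) (hT : 0 ≤ T)
    (y : ℝ → EuclideanSpace ℝ (Fin n))
    (hne : ∀ t ∈ Set.Icc (0:ℝ) T, y t ≠ 0)
    (hODE : ∀ t ∈ Set.Icc (0:ℝ) T,
      HasDerivAt y ((-(k * (1 / ‖y t‖ + ‖y t‖))) • y t) t) :
    (∀ t ∈ Set.Icc (0:ℝ) T,
      HasDerivAt (fun s => ‖y s‖) (-(k * (1 + ‖y t‖^2))) t) ∧
    (∀ t ∈ Set.Icc (0:ℝ) T,
      ‖y t‖ = Real.tan (Real.arctan ‖y 0‖ - k * t)) ∧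
    Real.tan (Real.arctan ‖y 0‖ - k * (Real.arctan ‖y 0‖ / k)) = 0 ∧
    Real.arctan ‖y 0‖ / k < Real.pi / (2 * k) := by
  have hr : ∀ t ∈ Set.Icc (0:ℝ) T,
      HasDerivAt (fun s => ‖y s‖) (-(k * (1 + ‖y t‖^2))) t := by
    intro t ht
    have hy := hODE t ht
    have hrpos : 0 < ‖y t‖ := norm_pos_iff.mpr (hne t ht)
    set c : ℝ := -(k * (1 / ‖y t‖ + ‖y t‖)) with hc
    have hinner : HasDerivAt (fun s => (inner ℝ (y s) (y s) : ℝ))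
        ((inner ℝ (y t) (c • y t) : ℝ) + (inner ℝ (c • y t) (y t) : ℝ)) t :=
      hy.inner ℝ hy
    have hsq : (inner ℝ (y t) (y t) : ℝ) ≠ 0 := by
      rw [real_inner_self_eq_norm_sq]; positivity
    have hsqrt := (Real.hasDerivAt_sqrt hsq).comp t hinner
    have hfun : (fun s => ‖y s‖) = fun s => Real.sqrt (inner ℝ (y s) (y s) : ℝ) := by
      funext s
      rw [real_inner_self_eq_norm_sq, Real.sqrt_sq (norm_nonneg _)]
    rw [hfun]
    convert hsqrt using 1
    · rfl
    · rfl
    · rfl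
    rw [real_inner_smul_left, real_inner_smul_right, real_inner_self_eq_norm_sq,
      Real.sqrt_sq (norm_nonneg _)]
    rw [hc]
    field_simp
    ring
  refine ⟨hr, ?_, ?_, ?_⟩
  · -- closed form
    set g : ℝ → ℝ := fun s => Real.arctan ‖y s‖ + k * s with hg
    have hg' : ∀ t ∈ Set.Icc (0:ℝ) T, HasDerivAt g 0 t := by
      intro t ht
      have h1 : HasDerivAt (fun s => Real.arctan ‖y s‖)
          ((1 / (1 + ‖y t‖ ^ 2)) * (-(k * (1 + ‖y t‖^2)))) t :=
        (Real.hasDerivAt_arctan ‖y t‖).comp (h₂ := Real.arctan) t (hr t ht)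
      have h2 : HasDerivAt (fun s : ℝ => k * s) k t := by
        simpa using (hasDerivAt_id t).const_mul k
      have := h1.add h2
      convert this using 1
      · rfl
      · rfl
      · rfl
      have hpos : (0:ℝ) < 1 + ‖y t‖ ^ 2 := by positivity
      field_simp
      ring
    have hconst : ∀ t ∈ Set.Icc (0:ℝ) T, g t = g 0 := by
      intro t ht
      have := eq_of_has_deriv_right_eq (f' := fun _ => (0:ℝ))
        (f := g) (g := fun _ => g 0) (a := 0) (b := T)
        (fun x hx => ((hg' x ⟨hx.1, hx.2.le⟩).hasDerivWithinAt))
        (fun x hx => (hasDerivAt_const x (g 0)).hasDerivWithinAt)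
        (fun x hx => ((hg' x hx).continuousAt).continuousWithinAt)
        continuousOn_const rfl
      exact this t ht
    intro t ht
    have h0 : (0:ℝ) ∈ Set.Icc (0:ℝ) T := ⟨le_refl _, hT⟩
    have := hconst t ht
    have harc : Real.arctan ‖y t‖ = Real.arctan ‖y 0‖ - k * t := by
      simp only [hg] at this; linarith
    rw [← harc, Real.tan_arctan]
  · rw [mul_div_cancel₀ _ hk.ne', sub_self, Real.tan_zero]
  · rw [show Real.pi / (2 * k) = (Real.pi / 2) / k by ring]
    exact div_lt_div_of_pos_right (Real.arctan_lt_pi_div_two _) hk
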